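/- Let f : ℝⁿ → ℝ be continuously differentiable, σ ∈ (0, 1), p_k → p*, v_k → v* ≠ 0, and suppose α̅_k → 0 with α̅_k > 0 and f(p_k + α̅_k v_k) > f(p_k) + σ α̅_k ⟨∇f(p_k), v_k⟩ for all k, while ⟨∇f(p_k), v_k⟩ < 0 for all k. Then ⟨∇f(p*), v*⟩ = 0. -/

import Mathlib

open Filter Topology

/-- second case of the global convergence proof: if the backtracking
step sizes tend to zero while the Armijo test keeps failing, then the limit direction
is orthogonal to the gradient at the limit point. -/
theorem stationarity_when_steps_vanish {n : ℕ}
    (f : EuclideanSpace ℝ (Fin n) → ℝ) (hf : ContDiff ℝ 1 f)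
    (σ : ℝ) (hσ : σ ∈ Set.Ioo (0 : ℝ) 1)
    (p : ℕ → EuclideanSpace ℝ (Fin n)) (pstar : EuclideanSpace ℝ (Fin n))
    (hp : Tendsto p atTop (𝓝 pstar))
    (v : ℕ → EuclideanSpace ℝ (Fin n)) (vstar : EuclideanSpace ℝ (Fin n))
    (hv : Tendsto v atTop (𝓝 vstar)) (hvstar : vstar ≠ 0)
    (α : ℕ → ℝ) (hαpos : ∀ k, 0 < α k) (hα0 : Tendsto α atTop (𝓝 0))
    (hfail : ∀ k, f (p k + α k • v k) >
      f (p k) + σ * α k * (inner ℝ (gradient f (p k)) (v k) : ℝ))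
    (hdesc : ∀ k, (inner ℝ (gradient f (p k)) (v k) : ℝ) < 0) :
    (inner ℝ (gradient f pstar) vstar : ℝ) = 0 := by
  have hdiff : Differentiable ℝ f := hf.differentiable one_ne_zero
  have hinner : ∀ x w : EuclideanSpace ℝ (Fin n),
      fderiv ℝ f x w = (inner ℝ (gradient f x) w : ℝ) := by
    intro x w
    have h := (hdiff x).hasGradientAt
    rw [hasGradientAt_iff_hasFDerivAt] at h
    rw [h.fderiv]
    exact InnerProductSpace.toDual_apply_apply
  -- continuity of the gradient
  have hgradcont : Continuous (fun x => gradient f x) := by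
    have h1 : Continuous (fderiv ℝ f) := hf.continuous_fderiv one_ne_zero
    have : (fun x => gradient f x)
        = fun x => (InnerProductSpace.toDual ℝ _).symm (fderiv ℝ f x) := rfl
    rw [this]
    exact (InnerProductSpace.toDual ℝ _).symm.continuous.comp h1
  -- MVT: pick θ k ∈ (0, α k) with the slope identity
  have key : ∀ k, ∃ θ ∈ Set.Ioo 0 (α k),
      (inner ℝ (gradient f (p k + θ • v k)) (v k) : ℝ)
        > σ * (inner ℝ (gradient f (p k)) (v k) : ℝ) := by
    intro k
    set g : ℝ → ℝ := fun t => f (p k + t • v k) with hg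
    have hderiv : ∀ t : ℝ, HasDerivAt g
        ((inner ℝ (gradient f (p k + t • v k)) (v k) : ℝ)) t := by
      intro t
      have hc : HasDerivAt (fun t : ℝ => p k + t • v k) (v k) t := by
        simpa using ((hasDerivAt_id t).smul_const (v k)).const_add (p k)
      have hF := (hdiff (p k + t • v k)).hasFDerivAt
      have := hF.comp_hasDerivAt t hc
      rw [hinner] at this
      exact this
    obtain ⟨θ, hθ, hslope⟩ := exists_hasDerivAt_eq_slope g _ (hαpos k)
      (fun t _ => (hderiv t).continuousAt.continuousWithinAt)
      (fun t _ => hderiv t)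
    refine ⟨θ, hθ, ?_⟩
    rw [hslope]
    have h1 := hfail k
    have hα := hαpos k
    rw [gt_iff_lt, lt_div_iff₀ (by simpa using hα)]
    simp only [hg]
    simp only [zero_smul, add_zero, sub_zero]
    nlinarith [h1]
  choose θ hθmem hθineq using key
  -- θ → 0
  have hθ0 : Tendsto θ atTop (𝓝 0) :=
    tendsto_of_tendsto_of_tendsto_of_le_of_le tendsto_const_nhds hα0
      (fun k => (hθmem k).1.le) (fun k => (hθmem k).2.le)
  -- limit point of shifted sequence
  have hq : Tendsto (fun k => p k + θ k • v k) atTop (𝓝 pstar) := by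
    have : Tendsto (fun k => p k + θ k • v k) atTop (𝓝 (pstar + (0:ℝ) • vstar)) :=
      hp.add (hθ0.smul hv)
    simpa using this
  set I : ℝ := (inner ℝ (gradient f pstar) vstar : ℝ)
  have hA : Tendsto (fun k => (inner ℝ (gradient f (p k + θ k • v k)) (v k) : ℝ))
      atTop (𝓝 I) :=
    Tendsto.inner ((hgradcont.tendsto pstar).comp hq) hv
  have hB : Tendsto (fun k => (inner ℝ (gradient f (p k)) (v k) : ℝ)) atTop (𝓝 I) :=
    Tendsto.inner ((hgradcont.tendsto pstar).comp hp) hv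
  have hle : σ * I ≤ I :=
    le_of_tendsto_of_tendsto' (hB.const_mul σ) hA (fun k => (hθineq k).le)
  have hneg : I ≤ 0 := le_of_tendsto hB (Eventually.of_forall fun k => (hdesc k).le)
  nlinarith [hσ.1, hσ.2]
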